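/- Let b ≥ 2 be an integer, j₁, j₂ ∈ ℕ₀ = {0,1,2,…}, m₁ ∈ {0,…,b^{j₁}−1}, m₂ ∈ {0,…,b^{j₂}−1}, ℓ₁, ℓ₂ ∈ {1,…,b−1}, and let z = (z₁,z₂) lie in the interior of I_{j₁,m₁} × I_{j₂,m₂}. Let k₁, k₂ ∈ {0,…,b−1} be such that z₁ ∈ [b^{−j₁−1}(bm₁+k₁), b^{−j₁−1}(bm₁+k₁+1)) and z₂ ∈ [b^{−j₂−1}(bm₂+k₂), b^{−j₂−1}(bm₂+k₂+1)). Then ∫_{[0,1)²} 1[x₁ > z₁]·1[x₂ > z₂] · h_{j₁,m₁,ℓ₁}(x₁) · h_{j₂,m₂,ℓ₂}(x₂) dx₁dx₂ = b^{−j₁−j₂−2} · [(bm₁+k₁+1−b^{j₁+1}z₁)·exp(2πik₁ℓ₁/b) + ∑_{r₁=k₁+1}^{b−1} exp(2πir₁ℓ₁/b)] · [(bm₂+k₂+1−b^{j₂+1}z₂)·exp(2πik₂ℓ₂/b) + ∑_{r₂=k₂+1}^{b−1} exp(2πir₂ℓ₂/b)]. -/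

import Mathlib

open Finset MeasureTheory

/-- `bexp b ℓ k = exp(2πiℓk/b)`. -/
noncomputable def bexp (b ℓ k : ℕ) : ℂ :=
  Complex.exp (2 * Real.pi * Complex.I * ℓ * k / b)

/-- The `b`-adic Haar function `h_{j,m,ℓ}` on `[0,1)`. -/
noncomputable def haar (b j m ℓ : ℕ) (x : ℝ) : ℂ :=
  ∑ k ∈ Finset.range b,
    if ((b:ℝ)^(j+1))⁻¹ * ((b:ℝ)*m + k) ≤ x ∧ x < ((b:ℝ)^(j+1))⁻¹ * ((b:ℝ)*m + k + 1)
    then bexp b ℓ k else 0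

lemma oneD (b : ℕ) (hb : 2 ≤ b) (j m ℓ : ℕ) (hm : m < b^j) (z : ℝ) (k : ℕ) (hk : k < b)
    (hzk : ((b:ℝ)^(j+1))⁻¹ * ((b:ℝ)*m + k) ≤ z ∧ z < ((b:ℝ)^(j+1))⁻¹ * ((b:ℝ)*m + k + 1)) :
    ∫ x in Set.Ico (0:ℝ) 1, (if z < x then (1:ℂ) else 0) * haar b j m ℓ x
      = (b:ℂ)^(-(j:ℤ)-1) * (((b:ℂ)*m + k + 1 - (b:ℂ)^(j+1) * (z:ℂ)) * bexp b ℓ k +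
          ∑ r ∈ Finset.Icc (k+1) (b-1), bexp b ℓ r) := by
  have hbR : (0:ℝ) < b := by positivity
  set c : ℝ := ((b:ℝ)^(j+1))⁻¹ with hc
  have hcpos : 0 < c := by positivity
  set a : ℕ → ℝ := fun r => c * ((b:ℝ)*m + r) with ha
  have hamono : ∀ r s : ℕ, r ≤ s → a r ≤ a s := by
    intro r s hrs
    have : (r:ℝ) ≤ s := by exact_mod_cast hrs
    simp only [ha]
    nlinarith
  have ha0 : 0 ≤ a 0 := by simp only [ha]; positivity
  have hab : a b ≤ 1 := by
    have hm' : (m:ℝ) + 1 ≤ (b:ℝ)^j := by exact_mod_cast hm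
    have : a b = ((b:ℝ)^(j+1))⁻¹ * ((b:ℝ) * ((m:ℝ)+1)) := by simp only [ha, hc]; ring
    rw [this, inv_mul_le_iff₀ (by positivity)]
    calc (b:ℝ) * ((m:ℝ)+1) ≤ (b:ℝ) * (b:ℝ)^j := by nlinarith
    _ = (b:ℝ)^(j+1) := by ring
    _ = (b:ℝ)^(j+1) * 1 := by ring
  have hsucc : ∀ r : ℕ, a (r+1) = c * ((b:ℝ)*m + r + 1) := by
    intro r; simp only [ha]; push_cast; ring
  have hsd : ∀ r : ℕ, a (r+1) - a r = c := by
    intro r; rw [hsucc]; simp only [ha]; ring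
  have haz : a k ≤ z := hzk.1
  have hza : z < a (k+1) := by rw [hsucc]; exact hzk.2
  have hz0 : 0 ≤ z := le_trans (le_trans ha0 (hamono 0 k (Nat.zero_le _))) haz
  set S : ℕ → Set ℝ := fun r => Set.Ico (a r) (a (r+1)) ∩ Set.Ioi z with hS
  have hSmeas : ∀ r, MeasurableSet (S r) := fun r =>
    measurableSet_Ico.inter measurableSet_Ioi
  have hpt : ∀ x : ℝ, (if z < x then (1:ℂ) else 0) * haar b j m ℓ x
      = ∑ r ∈ Finset.range b, Set.indicator (S r) (fun _ => bexp b ℓ r) x := by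
    intro x
    rw [haar, Finset.mul_sum]
    refine Finset.sum_congr rfl fun r _ => ?_
    rw [← hsucc]
    show (if z < x then (1:ℂ) else 0) * (if a r ≤ x ∧ x < a (r+1) then bexp b ℓ r else 0) = _
    by_cases hA : z < x
    · by_cases hB : a r ≤ x ∧ x < a (r+1)
      · have hmem : x ∈ S r := Set.mem_inter (Set.mem_Ico.2 hB) (Set.mem_Ioi.2 hA)
        rw [if_pos hA, if_pos hB, Set.indicator_of_mem hmem, one_mul]
      · have hmem : x ∉ S r := fun hx => hB (Set.mem_Ico.1 hx.1)
        rw [if_neg hB, Set.indicator_of_notMem hmem, mul_zero]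
    · have hmem : x ∉ S r := fun hx => hA (Set.mem_Ioi.1 hx.2)
      rw [if_neg hA, Set.indicator_of_notMem hmem, zero_mul]
  have hint : ∀ r ∈ Finset.range b,
      IntegrableOn (fun x => Set.indicator (S r) (fun _ => bexp b ℓ r) x) (Set.Ico (0:ℝ) 1) := by
    intro r _
    exact (integrableOn_const (by simp [Real.volume_Ico])).indicator (hSmeas r)
  calc ∫ x in Set.Ico (0:ℝ) 1, (if z < x then (1:ℂ) else 0) * haar b j m ℓ x
      = ∫ x in Set.Ico (0:ℝ) 1, ∑ r ∈ Finset.range b,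
          Set.indicator (S r) (fun _ => bexp b ℓ r) x := by simp_rw [hpt]
    _ = ∑ r ∈ Finset.range b, ∫ x in Set.Ico (0:ℝ) 1,
          Set.indicator (S r) (fun _ => bexp b ℓ r) x := integral_finset_sum _ hint
    _ = ∑ r ∈ Finset.range b, (if r < k then 0 else if r = k then
          (a (k+1) - z) • bexp b ℓ k else c • bexp b ℓ r) := by
        refine Finset.sum_congr rfl fun r hr => ?_
        rw [Finset.mem_range] at hr
        rw [setIntegral_indicator (hSmeas r), setIntegral_const]
        rcases lt_trichotomy r k with h | h | h
        · have : S r = ∅ := by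
            apply Set.eq_empty_iff_forall_notMem.2
            rintro x ⟨⟨h1, h2⟩, h3⟩
            have := hamono (r+1) k h
            simp only [Set.mem_Ioi] at h3
            linarith
          simp [this, h]
        · subst h
          have hSk : S r = Set.Ioo z (a (r+1)) := by
            ext x
            simp only [hS, Set.mem_inter_iff, Set.mem_Ico, Set.mem_Ioi, Set.mem_Ioo]
            constructor
            · rintro ⟨⟨h1, h2⟩, h3⟩; exact ⟨h3, h2⟩
            · rintro ⟨h1, h2⟩; exact ⟨⟨le_trans haz h1.le, h2⟩, h1⟩
          have hsub : Set.Ico (0:ℝ) 1 ∩ S r = S r := by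
            apply Set.inter_eq_self_of_subset_right
            rw [hSk]
            intro x hx
            rw [Set.mem_Ioo] at hx
            have h1 : a (r+1) ≤ 1 := le_trans (hamono (r+1) b hk) hab
            exact Set.mem_Ico.2 ⟨le_trans hz0 hx.1.le, lt_of_lt_of_le hx.2 h1⟩
          rw [hsub, hSk, measureReal_def, Real.volume_Ioo, ENNReal.toReal_ofReal (by linarith)]
          simp
        · have hSr : S r = Set.Ico (a r) (a (r+1)) := by
            rw [hS]
            apply Set.inter_eq_self_of_subset_left
            intro x hx
            simp only [Set.mem_Ico] at hx
            have : a (k+1) ≤ a r := hamono (k+1) r h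
            simp only [Set.mem_Ioi]
            linarith
          have hsub : Set.Ico (0:ℝ) 1 ∩ S r = S r := by
            apply Set.inter_eq_self_of_subset_right
            rw [hSr]
            intro x hx
            rw [Set.mem_Ico] at hx
            have h0 : 0 ≤ a r := le_trans ha0 (hamono 0 r (Nat.zero_le _))
            have h1 : a (r+1) ≤ 1 := le_trans (hamono (r+1) b hr) hab
            exact Set.mem_Ico.2 ⟨le_trans h0 hx.1, lt_of_lt_of_le hx.2 h1⟩
          rw [hsub, hSr, measureReal_def, Real.volume_Ico,
            ENNReal.toReal_ofReal (by rw [hsd r]; exact hcpos.le), hsd r]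
          have h3 : ¬ r < k := by omega
          have h4 : r ≠ k := by omega
          rw [if_neg h3, if_neg h4]
    _ = (a (k+1) - z) • bexp b ℓ k + ∑ r ∈ Finset.Icc (k+1) (b-1), c • bexp b ℓ r := by
        rw [Finset.range_eq_Ico, ← Finset.sum_Ico_consecutive _ (Nat.zero_le (k+1)) hk,
          Finset.sum_Ico_succ_top (Nat.zero_le k)]
        have h1 : ∑ r ∈ Finset.Ico 0 k, (if r < k then (0:ℂ) else if r = k then
            (a (k+1) - z) • bexp b ℓ k else c • bexp b ℓ r) = 0 := by
          apply Finset.sum_eq_zero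
          intro r hr
          simp only [Finset.mem_Ico] at hr
          simp [hr.2]
        have h2 : Finset.Ico (k+1) b = Finset.Icc (k+1) (b-1) := by
          rw [← Finset.Ico_add_one_right_eq_Icc]
          congr 1
          omega
        rw [h1, h2]
        simp only [lt_irrefl, if_false, if_neg (lt_irrefl k), if_pos rfl, zero_add]
        congr 1
        apply Finset.sum_congr rfl
        intro r hr
        simp only [Finset.mem_Icc] at hr
        have h3 : ¬ r < k := by omega
        have h4 : r ≠ k := by omega
        simp [h3, h4]
    _ = (b:ℂ)^(-(j:ℤ)-1) * (((b:ℂ)*m + k + 1 - (b:ℂ)^(j+1) * (z:ℂ)) * bexp b ℓ k +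
          ∑ r ∈ Finset.Icc (k+1) (b-1), bexp b ℓ r) := by
        have hb0 : (b:ℂ) ≠ 0 := by exact_mod_cast show b ≠ 0 by omega
        have hzp : (b:ℂ)^(-(j:ℤ)-1) = ((b:ℂ)^(j+1))⁻¹ := by
          rw [show -(j:ℤ)-1 = -((j:ℤ)+1) by ring, zpow_neg]
          norm_cast
        have hcC : (c:ℂ) = ((b:ℂ)^(j+1))⁻¹ := by rw [hc]; push_cast; ring
        have hc1 : (c:ℂ) * (b:ℂ)^(j+1) = 1 := by
          rw [hcC]; field_simp
        have h1 : ((a (k+1) - z : ℝ) : ℂ)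
            = (c:ℂ) * ((b:ℂ)*m + k + 1 - (b:ℂ)^(j+1) * (z:ℂ)) := by
          rw [hsucc]; push_cast; linear_combination (z:ℂ) * hc1
        rw [hzp, ← hcC]
        simp_rw [Complex.real_smul]
        rw [h1, mul_add, Finset.mul_sum, ← mul_assoc]

/-- The Haar coefficient of the indicator of `(z₁,1) × (z₂,1)` when `z` lies in the
interior of the `b`-adic box `I_{j₁,m₁} × I_{j₂,m₂}`, with `z` in the `(k₁,k₂)`-subbox. -/
theorem haar_coeff_indicator_in_box (b : ℕ) (hb : 2 ≤ b) (j₁ j₂ m₁ m₂ ℓ₁ ℓ₂ : ℕ)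
    (hm₁ : m₁ < b ^ j₁) (hm₂ : m₂ < b ^ j₂)
    (hℓ₁ : 1 ≤ ℓ₁) (hℓ₁' : ℓ₁ ≤ b - 1) (hℓ₂ : 1 ≤ ℓ₂) (hℓ₂' : ℓ₂ ≤ b - 1)
    (z₁ z₂ : ℝ)
    (hz₁ : z₁ ∈ Set.Ioo ((b:ℝ)^(-(j₁:ℤ)) * m₁) ((b:ℝ)^(-(j₁:ℤ)) * (m₁ + 1)))
    (hz₂ : z₂ ∈ Set.Ioo ((b:ℝ)^(-(j₂:ℤ)) * m₂) ((b:ℝ)^(-(j₂:ℤ)) * (m₂ + 1)))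
    (k₁ k₂ : ℕ) (hk₁ : k₁ < b) (hk₂ : k₂ < b)
    (hzk₁ : ((b:ℝ)^(j₁+1))⁻¹ * ((b:ℝ)*m₁ + k₁) ≤ z₁ ∧
            z₁ < ((b:ℝ)^(j₁+1))⁻¹ * ((b:ℝ)*m₁ + k₁ + 1))
    (hzk₂ : ((b:ℝ)^(j₂+1))⁻¹ * ((b:ℝ)*m₂ + k₂) ≤ z₂ ∧
            z₂ < ((b:ℝ)^(j₂+1))⁻¹ * ((b:ℝ)*m₂ + k₂ + 1)) :
    (∫ x₁ in Set.Ico (0:ℝ) 1, ∫ x₂ in Set.Ico (0:ℝ) 1,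
        (if z₁ < x₁ then (1:ℂ) else 0) * (if z₂ < x₂ then (1:ℂ) else 0) *
          haar b j₁ m₁ ℓ₁ x₁ * haar b j₂ m₂ ℓ₂ x₂)
      = (b : ℂ) ^ (-(j₁:ℤ) - (j₂:ℤ) - 2) *
        (((b:ℂ)*m₁ + k₁ + 1 - (b:ℂ)^(j₁+1) * (z₁:ℂ)) * bexp b ℓ₁ k₁ +
          ∑ r₁ ∈ Finset.Icc (k₁+1) (b-1), bexp b ℓ₁ r₁) *
        (((b:ℂ)*m₂ + k₂ + 1 - (b:ℂ)^(j₂+1) * (z₂:ℂ)) * bexp b ℓ₂ k₂ +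
          ∑ r₂ ∈ Finset.Icc (k₂+1) (b-1), bexp b ℓ₂ r₂) := by
  have hb0 : (b:ℂ) ≠ 0 := by exact_mod_cast show b ≠ 0 by omega
  have I₁ := oneD b hb j₁ m₁ ℓ₁ hm₁ z₁ k₁ hk₁ hzk₁
  have I₂ := oneD b hb j₂ m₂ ℓ₂ hm₂ z₂ k₂ hk₂ hzk₂
  have hinner : ∀ x₁ : ℝ,
      (∫ x₂ in Set.Ico (0:ℝ) 1,
        (if z₁ < x₁ then (1:ℂ) else 0) * (if z₂ < x₂ then (1:ℂ) else 0) *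
          haar b j₁ m₁ ℓ₁ x₁ * haar b j₂ m₂ ℓ₂ x₂)
      = ((if z₁ < x₁ then (1:ℂ) else 0) * haar b j₁ m₁ ℓ₁ x₁) *
        ∫ x₂ in Set.Ico (0:ℝ) 1,
          (if z₂ < x₂ then (1:ℂ) else 0) * haar b j₂ m₂ ℓ₂ x₂ := by
    intro x₁
    rw [← integral_const_mul]
    congr 1
    ext x₂
    ring
  calc (∫ x₁ in Set.Ico (0:ℝ) 1, ∫ x₂ in Set.Ico (0:ℝ) 1,
        (if z₁ < x₁ then (1:ℂ) else 0) * (if z₂ < x₂ then (1:ℂ) else 0) *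
          haar b j₁ m₁ ℓ₁ x₁ * haar b j₂ m₂ ℓ₂ x₂)
      = ∫ x₁ in Set.Ico (0:ℝ) 1,
          ((if z₁ < x₁ then (1:ℂ) else 0) * haar b j₁ m₁ ℓ₁ x₁) *
          ∫ x₂ in Set.Ico (0:ℝ) 1,
            (if z₂ < x₂ then (1:ℂ) else 0) * haar b j₂ m₂ ℓ₂ x₂ := by
        simp_rw [hinner]
    _ = (∫ x₁ in Set.Ico (0:ℝ) 1,
          (if z₁ < x₁ then (1:ℂ) else 0) * haar b j₁ m₁ ℓ₁ x₁) *
        ∫ x₂ in Set.Ico (0:ℝ) 1,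
          (if z₂ < x₂ then (1:ℂ) else 0) * haar b j₂ m₂ ℓ₂ x₂ := integral_mul_const _ _
    _ = _ := by
        rw [I₁, I₂]
        rw [show (-(j₁:ℤ) - (j₂:ℤ) - 2) = (-(j₁:ℤ)-1) + (-(j₂:ℤ)-1) by ring,
          zpow_add₀ hb0]
        ring
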